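/- Let ψ ∈ (0, π) and c₀ > 0. Then there exists a constant C > 0, depending only on ψ and c₀, such that for every complex number u with Re(u) ≤ |u|·cos ψ and every real μ ≥ 0 with |u − μ| ≥ c₀, one has 1/|u − μ| ≤ C·min(1/(1 + |u|), 1/(1 + μ)). -/

import Mathlib

/-- Choice of the keyhole contour: if `u` stays at angle at least `ψ` away from the
positive real axis (i.e. `Re u ≤ |u|·cos ψ`) and at distance at least `c₀` from the
nonnegative real `μ`, then `1/|u−μ| ≤ C·min(1/(1+|u|), 1/(1+μ))` for a constant `C`
depending only on `ψ` and `c₀`. -/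
theorem keyhole_contour_resolvent_bound
    (psi : ℝ) (hpsi : psi ∈ Set.Ioo 0 Real.pi) (c0 : ℝ) (hc0 : 0 < c0) :
    ∃ C : ℝ, 0 < C ∧ ∀ (u : ℂ) (mu : ℝ),
      u.re ≤ ‖u‖ * Real.cos psi → 0 ≤ mu →
      c0 ≤ ‖u - (mu : ℂ)‖ →
      1 / ‖u - (mu : ℂ)‖ ≤
        C * min (1 / (1 + ‖u‖)) (1 / (1 + mu)) := by
  obtain ⟨hψ0, hψπ⟩ := hpsi
  have hcos1 : Real.cos psi < 1 := by
    have := Real.cos_lt_cos_of_nonneg_of_le_pi (le_refl 0) hψπ.le hψ0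
    simpa using this
  set m : ℝ := max (Real.cos psi) 0 with hm
  have hm0 : 0 ≤ m := le_max_right _ _
  have hm1 : m < 1 := max_lt hcos1 one_pos
  set δ : ℝ := 1 - m with hδdef
  have hδ : 0 < δ := by simp [hδdef]; linarith
  set s : ℝ := Real.sqrt δ with hs
  have hs0 : 0 < s := Real.sqrt_pos.mpr hδ
  refine ⟨1 / c0 + 1 / s, by positivity, ?_⟩
  intro u mu hre hmu hdist
  set a : ℝ := ‖u‖ with ha
  set d : ℝ := ‖u - (mu : ℂ)‖ with hd
  have ha0 : 0 ≤ a := norm_nonneg u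
  have hd0 : 0 < d := lt_of_lt_of_le hc0 hdist
  set t : ℝ := max a mu with ht
  have ht0 : 0 ≤ t := le_trans ha0 (le_max_left _ _)
  -- key geometric bound : δ * t^2 ≤ d^2
  have hre' : u.re ≤ a * m := by
    calc u.re ≤ a * Real.cos psi := hre
    _ ≤ a * m := by
      apply mul_le_mul_of_nonneg_left (le_max_left _ _) ha0
  have hasq : a ^ 2 = u.re ^ 2 + u.im ^ 2 := by
    rw [ha, Complex.sq_norm, Complex.normSq_apply]; ring
  have hdsq : d ^ 2 = (u.re - mu) ^ 2 + u.im ^ 2 := by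
    rw [hd, Complex.sq_norm, Complex.normSq_apply]
    simp [Complex.sub_re, Complex.sub_im]
    ring
  have htsq : t ^ 2 ≤ a ^ 2 + mu ^ 2 := by
    rcases max_cases a mu with ⟨h1, _⟩ | ⟨h1, _⟩ <;> rw [ht, h1] <;> nlinarith
  have hkey : δ * t ^ 2 ≤ d ^ 2 := by
    have h1 : mu * (a * m - u.re) ≥ 0 := by
      apply mul_nonneg hmu; linarith
    nlinarith [sq_nonneg (a - mu), mul_nonneg (mul_nonneg hmu ha0) (by linarith : (0:ℝ) ≤ 1 - m)]
  have hst : s * t ≤ d := by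
    have := Real.sqrt_le_sqrt hkey
    rwa [Real.sqrt_mul hδ.le, Real.sqrt_sq ht0, Real.sqrt_sq hd0.le, ← hs] at this
  have h1t : 0 < 1 + t := by linarith
  -- 1 + t ≤ C * d
  have hCd : 1 + t ≤ (1 / c0 + 1 / s) * d := by
    have h1 : 1 ≤ d / c0 := (one_le_div hc0).mpr hdist
    have h2 : t ≤ d / s := (le_div_iff₀' hs0).mpr hst
    calc 1 + t ≤ d / c0 + d / s := by linarith
    _ = (1 / c0 + 1 / s) * d := by ring
  have hmin : min (1 / (1 + a)) (1 / (1 + mu)) = 1 / (1 + t) := by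
    rcases le_total a mu with h | h
    · rw [ht, max_eq_right h]
      apply min_eq_right
      apply one_div_le_one_div_of_le (by linarith) (by linarith)
    · rw [ht, max_eq_left h]
      apply min_eq_left
      apply one_div_le_one_div_of_le (by linarith) (by linarith)
  rw [hmin, mul_one_div, div_le_div_iff₀ hd0 h1t, one_mul]
  exact hCd
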